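/- Let Γ be a totally ordered abelian group that is an n-dimensional ℚ-vector space, with canonical valuation ν on ℂ((Γ)). For a ℚ-basis γ₁,…,γ_n of Γ and elements y₁,…,y_n ∈ ℂ((Γ)) with ν(y_i) = γ_i, define, for a top form ω = f · dy₁∧⋯∧dy_n ∈ Λⁿ Ω¹_top(ℂ((Γ))/ℂ), the value ν(ω) := ν(f) + γ₁ + ⋯ + γ_n. Then ν(ω) is independent of the choice of ℚ-basis (γ_i) and of the elements (y_i); moreover ν(ω₁+ω₂) ≥ min(ν(ω₁), ν(ω₂)) and ν(g·ω) = ν(g) + ν(ω). -/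

import Mathlib

set_option synthInstance.maxHeartbeats 1000000
set_option maxHeartbeats 1000000

open scoped TensorProduct

noncomputable section

variable (Γ : Type*) [AddCommGroup Γ] [LinearOrder Γ] [IsOrderedAddMonoid Γ] [Module ℚ Γ]

/-- The generalized Laurent series field `ℂ((Γ))` (Hahn series with well-ordered support). -/
abbrev LaurentField : Type _ := HahnSeries Γ ℂ

/-- `ℂ((Γ)) ⊗_ℂ ℂ((Γ))`, regarded as a module over `ℂ((Γ))` via the first tensor factor. -/
abbrev TensorSq : Type _ := LaurentField Γ ⊗[ℂ] LaurentField Γ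

variable {Γ}

/-- The differential `d¹f`, i.e. the class of `1 ⊗ f` in `Ω¹_top = (R ⊗_ℂ R)/M_FD`. -/
def formDiff (MFD : @Submodule (LaurentField Γ) (TensorSq Γ) _
      (@AddCommGroup.toAddCommMonoid _ inferInstance) inferInstance)
    (f : LaurentField Γ) : TensorSq Γ ⧸ MFD :=
  Submodule.Quotient.mk (1 ⊗ₜ[ℂ] f)

/-- The top differential form `d¹y₁ ∧ d¹y₂ ∧ ⋯ ∧ d¹y_n`, as an element of the exterior
algebra of `Ω¹_top(ℂ((Γ))/ℂ)` over `ℂ((Γ))`. -/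
def topForm {n : ℕ} (MFD : @Submodule (LaurentField Γ) (TensorSq Γ) _
      (@AddCommGroup.toAddCommMonoid _ inferInstance) inferInstance)
    (y : Fin n → LaurentField Γ) :
    ExteriorAlgebra (LaurentField Γ) (TensorSq Γ ⧸ MFD) :=
  (List.ofFn fun i => ExteriorAlgebra.ι (LaurentField Γ) (formDiff MFD (y i))).prod

/-- `y₁, …, y_n` are admissible if they are nonzero and their values
`γ_i = ν(y_i)` (the orders) form a `ℚ`-basis of `Γ`. -/
def Admissible {n : ℕ} (y : Fin n → LaurentField Γ) : Prop :=
  (∀ i, y i ≠ 0) ∧ ∃ b : Module.Basis (Fin n) ℚ Γ, ∀ i, b i = (y i).order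

lemma aux_mul_coeff (a b : HahnSeries Γ ℂ) {α β : Γ}
    (ha : ∀ γ, γ < α → a.coeff γ = 0) (hb : ∀ γ, γ < β → b.coeff γ = 0) :
    (∀ γ, γ < α + β → (a * b).coeff γ = 0) ∧
      (a * b).coeff (α + β) = a.coeff α * b.coeff β := by
  have hsa : ∀ γ ∈ a.support, α ≤ γ := fun γ hγ => le_of_not_gt fun h => hγ (ha γ h)
  have hsb : ∀ γ ∈ b.support, β ≤ γ := fun γ hγ => le_of_not_gt fun h => hγ (hb γ h)
  constructor
  · intro γ hγ
    rw [HahnSeries.coeff_mul]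
    apply Finset.sum_eq_zero
    rintro ⟨i, j⟩ hij
    rw [Finset.mem_addAntidiagonal] at hij
    exfalso
    have := add_le_add (hsa i hij.1) (hsb j hij.2.1)
    rw [hij.2.2] at this
    exact absurd hγ (not_lt_of_ge this)
  · rw [HahnSeries.coeff_mul]
    rw [Finset.sum_eq_single (α, β)]
    · rintro ⟨i, j⟩ hij hne
      rw [Finset.mem_addAntidiagonal] at hij
      exfalso
      apply hne
      have hi := hsa i hij.1
      have hj := hsb j hij.2.1
      have hij2 := hij.2.2
      have : i = α := by
        by_contra hne'
        have h1 : α < i := lt_of_le_of_ne hi (Ne.symm hne')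
        have h2 := add_lt_add_of_lt_of_le h1 hj
        rw [hij2] at h2
        exact lt_irrefl _ h2
      subst this
      have : j = β := by
        have := hij2
        exact add_left_cancel (by rw [this])
      simp [this]
    · intro h
      rw [Finset.mem_addAntidiagonal] at h
      push_neg at h
      by_cases hA : a.coeff α = 0
      · simp [hA]
      by_cases hB : b.coeff β = 0
      · simp [hB]
      exact absurd rfl (h hA hB)

lemma aux_prod_coeff {m : ℕ} (g : Fin m → HahnSeries Γ ℂ) (γ : Fin m → Γ)
    (h : ∀ i, ∀ δ, δ < γ i → (g i).coeff δ = 0) :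
    (∀ δ, δ < ∑ i, γ i → (∏ i, g i).coeff δ = 0) ∧
      (∏ i, g i).coeff (∑ i, γ i) = ∏ i, (g i).coeff (γ i) := by
  induction m with
  | zero =>
    refine ⟨fun δ hδ => ?_, by simp⟩
    simp only [Finset.univ_eq_empty, Finset.prod_empty, Finset.sum_empty] at *
    rw [HahnSeries.coeff_one, if_neg (ne_of_lt hδ)]
  | succ m ih =>
    have IH := ih (fun i => g i.succ) (fun i => γ i.succ) (fun i => h i.succ)
    rw [Fin.prod_univ_succ, Fin.sum_univ_succ]
    have key := aux_mul_coeff (g 0) (∏ i : Fin m, g i.succ) (h 0) IH.1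
    refine ⟨key.1, ?_⟩
    rw [key.2, IH.2, Fin.prod_univ_succ]

lemma aux_order_eq (x : HahnSeries Γ ℂ) (Δ : Γ) (h0 : x.coeff Δ ≠ 0)
    (h : ∀ δ, δ < Δ → x.coeff δ = 0) : x ≠ 0 ∧ x.order = Δ := by
  have hx : x ≠ 0 := HahnSeries.ne_zero_of_coeff_ne_zero h0
  refine ⟨hx, le_antisymm (HahnSeries.order_le_of_coeff_ne_zero h0) ?_⟩
  by_contra hc
  push_neg at hc
  exact HahnSeries.coeff_order_eq_zero.not.2 hx (h _ hc)

lemma aux_prod_single {ι : Type*} (t : Finset ι) (s : ι → Γ) :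
    (∏ j ∈ t, HahnSeries.single (s j) (1 : ℂ)) = HahnSeries.single (∑ j ∈ t, s j) 1 := by
  classical
  induction t using Finset.induction with
  | empty => simp
  | insert _ _ hx ih =>
    rw [Finset.prod_insert hx, Finset.sum_insert hx, ih, HahnSeries.single_mul_single, mul_one]


lemma aux_det {n : ℕ} (e : Γ ≃ₗ[ℚ] (Fin n → ℚ))
    (D : Fin n → HahnSeries Γ ℂ → HahnSeries Γ ℂ)
    (hD : ∀ (i : Fin n) (f : HahnSeries Γ ℂ) (γ : Γ),
      (D i f).coeff γ = ((e γ i + 1 : ℚ) : ℂ) * f.coeff (γ + e.symm (Pi.single i 1)))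
    {y : Fin n → HahnSeries Γ ℂ} (hy0 : ∀ i, y i ≠ 0)
    (b : Module.Basis (Fin n) ℚ Γ) (hb : ∀ i, b i = (y i).order) :
    Matrix.det (Matrix.of fun i j => D j (y i)) ≠ 0 ∧
      (Matrix.det (Matrix.of fun i j => D j (y i))).order
        + ∑ j, e.symm (Pi.single j 1) = ∑ i, (y i).order := by
  classical
  set s : Fin n → Γ := fun j => e.symm (Pi.single j 1) with hs
  set γ : Fin n → Γ := fun i => (y i).order with hγ
  set Δ : Γ := ∑ i, γ i with hΔ
  -- the shifted derivative coefficient formula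
  have hT : ∀ (j : Fin n) (f : HahnSeries Γ ℂ) (δ : Γ),
      (HahnSeries.single (s j) (1 : ℂ) * D j f).coeff δ = ((e δ j : ℚ) : ℂ) * f.coeff δ := by
    intro j f δ
    have h1 : (HahnSeries.single (s j) (1 : ℂ) * D j f).coeff ((δ - s j) + s j)
        = 1 * (D j f).coeff (δ - s j) := HahnSeries.coeff_single_mul_add
    rw [sub_add_cancel] at h1
    rw [h1, one_mul, hD j f (δ - s j), sub_add_cancel]
    have h2 : e (δ - s j) j = e δ j - 1 := by
      rw [map_sub]
      simp [hs, Pi.sub_apply, LinearEquiv.apply_symm_apply]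
    rw [h2]
    norm_num
  set Tmat : Matrix (Fin n) (Fin n) (HahnSeries Γ ℂ) :=
    Matrix.of fun i j => HahnSeries.single (s j) (1 : ℂ) * D j (y i) with hTmat
  set Dmat : Matrix (Fin n) (Fin n) (HahnSeries Γ ℂ) :=
    Matrix.of fun i j => D j (y i) with hDmat
  have hTD : Tmat = Dmat * Matrix.diagonal (fun j => HahnSeries.single (s j) (1 : ℂ)) := by
    ext i j
    rw [Matrix.mul_diagonal]
    simp [hTmat, hDmat, mul_comm]
  have hdetTD : Tmat.det = Dmat.det * HahnSeries.single (∑ j, s j) 1 := by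
    rw [hTD, Matrix.det_mul, Matrix.det_diagonal, aux_prod_single]
  -- entrywise lower bounds
  have hlow : ∀ (i j : Fin n) (δ : Γ), δ < γ i → (Tmat i j).coeff δ = 0 := by
    intro i j δ hδ
    rw [hTmat, Matrix.of_apply, hT, HahnSeries.coeff_eq_zero_of_lt_order, mul_zero]
    exact hδ
  have htop : ∀ i j : Fin n, (Tmat i j).coeff (γ i) = ((e (γ i) j : ℚ) : ℂ) * (y i).leadingCoeff := by
    intro i j
    rw [hTmat, Matrix.of_apply, hT, HahnSeries.leadingCoeff_eq]
  -- the coefficient extraction hom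
  set cof : ∀ δ : Γ, HahnSeries Γ ℂ →+ ℂ := fun δ =>
    { toFun := fun x => x.coeff δ, map_zero' := rfl, map_add' := fun _ _ => rfl } with hcof
  set Mc : Matrix (Fin n) (Fin n) ℂ := Matrix.of fun i j => ((e (γ i) j : ℚ) : ℂ) with hMc
  set C : ℂ := ∏ i, (y i).leadingCoeff with hC
  have hprod : ∀ σ : Equiv.Perm (Fin n),
      (∏ i, Tmat (σ i) i).coeff Δ = (∏ i, Mc (σ i) i) * C ∧
      (∀ δ, δ < Δ → (∏ i, Tmat (σ i) i).coeff δ = 0) := by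
    intro σ
    have hsum : ∑ i, γ (σ i) = Δ := Equiv.sum_comp σ γ
    have key := aux_prod_coeff (fun i => Tmat (σ i) i) (fun i => γ (σ i))
      (fun i δ hδ => hlow (σ i) i δ hδ)
    rw [hsum] at key
    refine ⟨?_, key.1⟩
    rw [key.2]
    have : ∀ i, (Tmat (σ i) i).coeff (γ (σ i)) = Mc (σ i) i * (y (σ i)).leadingCoeff :=
      fun i => htop (σ i) i
    rw [Finset.prod_congr rfl (fun i _ => this i), Finset.prod_mul_distrib,
      Equiv.prod_comp σ (fun i => (y i).leadingCoeff)]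
  -- coefficient of the determinant
  have hdet_coeff : Tmat.det.coeff Δ = Mc.det * C := by
    rw [Matrix.det_apply]
    have : (cof Δ) (∑ σ : Equiv.Perm (Fin n), Equiv.Perm.sign σ • ∏ i, Tmat (σ i) i)
        = ∑ σ : Equiv.Perm (Fin n), Equiv.Perm.sign σ • ((∏ i, Mc (σ i) i) * C) := by
      rw [map_sum]
      refine Finset.sum_congr rfl fun σ _ => ?_
      rw [Units.smul_def, Units.smul_def, map_zsmul]
      have h1 : (cof Δ) (∏ i, Tmat (σ i) i) = (∏ i, Mc (σ i) i) * C := (hprod σ).1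
      rw [h1]
    simp only [hcof, AddMonoidHom.coe_mk, ZeroHom.coe_mk] at this
    rw [this, Matrix.det_apply, Finset.sum_mul]
    exact Finset.sum_congr rfl fun σ _ => (smul_mul_assoc _ _ _).symm
  have hdet_low : ∀ δ, δ < Δ → Tmat.det.coeff δ = 0 := by
    intro δ hδ
    rw [Matrix.det_apply]
    have : (cof δ) (∑ σ : Equiv.Perm (Fin n), Equiv.Perm.sign σ • ∏ i, Tmat (σ i) i) = 0 := by
      rw [map_sum]
      refine Finset.sum_eq_zero fun σ _ => ?_
      rw [Units.smul_def, map_zsmul]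
      have h0 : (cof δ) (∏ i, Tmat (σ i) i) = 0 := (hprod σ).2 δ hδ
      rw [h0, smul_zero]
    simpa only [hcof, AddMonoidHom.coe_mk, ZeroHom.coe_mk] using this
  -- det Mc ≠ 0
  have hMc_ne : Mc.det ≠ 0 := by
    set Mq : Matrix (Fin n) (Fin n) ℚ := Matrix.of fun i j => e (γ i) j with hMq
    have hmap : Mc = (Rat.castHom ℂ).mapMatrix Mq := by
      ext i j; simp [hMc, hMq]
    rw [hmap, ← RingHom.map_det]
    rw [map_ne_zero]
    have hMq' : Mq = (LinearMap.toMatrix b (Pi.basisFun ℚ (Fin n)) e.toLinearMap).transpose := by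
      ext i j
      rw [Matrix.transpose_apply, LinearMap.toMatrix_apply]
      simp [hMq, hb, hγ]
    rw [hMq', Matrix.det_transpose]
    exact (LinearEquiv.isUnit_det e b (Pi.basisFun ℚ (Fin n))).ne_zero
  have hC_ne : C ≠ 0 := by
    rw [hC]
    exact Finset.prod_ne_zero_iff.mpr fun i _ => HahnSeries.leadingCoeff_ne_zero.mpr (hy0 i)
  have hcoeff_ne : Tmat.det.coeff Δ ≠ 0 := by
    rw [hdet_coeff]; exact mul_ne_zero hMc_ne hC_ne
  obtain ⟨hTne, hTord⟩ := aux_order_eq Tmat.det Δ hcoeff_ne hdet_low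
  have hsingle_ne : (HahnSeries.single (∑ j, s j) (1 : ℂ)) ≠ 0 :=
    HahnSeries.single_ne_zero one_ne_zero
  have hDne : Dmat.det ≠ 0 := by
    intro h
    rw [hdetTD, h, zero_mul] at hTne
    exact hTne rfl
  refine ⟨hDne, ?_⟩
  have := hTord
  rw [hdetTD, HahnSeries.order_mul hDne hsingle_ne,
    HahnSeries.order_single one_ne_zero] at this
  rw [this]

set_option maxHeartbeats 8000000 in
/-- Let `Γ` be a totally ordered abelian group which is an `n`-dimensional
`ℚ`-vector space (an isomorphism `e : Γ ≅ ℚⁿ` is fixed), let `ν` be the canonical valuation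
of `ℂ((Γ))` (`ν f = f.order` for `f ≠ 0`), and let `Ω¹_top = (R ⊗ R)/M_FD` be the topological
Kähler differentials, defined by formal partial differentiation `D` with respect to `e`.
For a top differential form `ω = f · d¹y₁ ∧ ⋯ ∧ d¹y_n` where `ν(y₁), …, ν(y_n)` is a
`ℚ`-basis of `Γ`, setting `ν(ω) := ν(f) + ν(y₁) + ⋯ + ν(y_n)` is independent of all choices,
and the resulting valuation on top forms satisfies `ν(ω₁+ω₂) ≥ min (ν ω₁) (ν ω₂)` and
`ν(g·ω) = ν(g) + ν(ω)`. -/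
theorem valuation_of_top_forms_well_defined {n : ℕ}
    (e : Γ ≃ₗ[ℚ] (Fin n → ℚ))
    (D : Fin n → LaurentField Γ → LaurentField Γ)
    (hD : ∀ (i : Fin n) (f : LaurentField Γ) (γ : Γ),
      (D i f).coeff γ = ((e γ i + 1 : ℚ) : ℂ) * f.coeff (γ + e.symm (Pi.single i 1)))
    (MFD : @Submodule (LaurentField Γ) (TensorSq Γ) _
      (@AddCommGroup.toAddCommMonoid _ inferInstance) inferInstance)
    (hMFD : MFD = Submodule.span (LaurentField Γ)
      {x | ∃ f : LaurentField Γ, x = 1 ⊗ₜ[ℂ] f -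
        ∑ i : Fin n, (D i f) ⊗ₜ[ℂ] (HahnSeries.single (e.symm (Pi.single i 1)) (1 : ℂ))}) :
    -- well-definedness: the value does not depend on the chosen ℚ-basis nor on the elements
    (∀ (f g : LaurentField Γ) (y y' : Fin n → LaurentField Γ),
      Admissible y → Admissible y' →
      f • topForm MFD y = g • topForm MFD y' →
      ((f = 0 ∧ g = 0) ∨
        (f ≠ 0 ∧ g ≠ 0 ∧
          f.order + ∑ i, (y i).order = g.order + ∑ i, (y' i).order))) ∧
    -- the valuation on top differential forms and its properties
    ∃ N : ExteriorAlgebra (LaurentField Γ) (TensorSq Γ ⧸ MFD) → WithTop Γ,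
      N 0 = ⊤ ∧
      (∀ (f : LaurentField Γ) (y : Fin n → LaurentField Γ), Admissible y → f ≠ 0 →
        N (f • topForm MFD y) = ((f.order + ∑ i, (y i).order : Γ) : WithTop Γ)) ∧
      (∀ ω₁ ω₂ : ExteriorAlgebra (LaurentField Γ) (TensorSq Γ ⧸ MFD),
        ω₁ ∈ Submodule.span (LaurentField Γ)
          {x | ∃ y : Fin n → LaurentField Γ, Admissible y ∧ x = topForm MFD y} →
        ω₂ ∈ Submodule.span (LaurentField Γ)
          {x | ∃ y : Fin n → LaurentField Γ, Admissible y ∧ x = topForm MFD y} →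
        min (N ω₁) (N ω₂) ≤ N (ω₁ + ω₂)) ∧
      (∀ (g : LaurentField Γ) (ω : ExteriorAlgebra (LaurentField Γ) (TensorSq Γ ⧸ MFD)),
        ω ∈ Submodule.span (LaurentField Γ)
          {x | ∃ y : Fin n → LaurentField Γ, Admissible y ∧ x = topForm MFD y} →
        g ≠ 0 → N (g • ω) = (g.order : WithTop Γ) + N ω) := by
  classical
  set s : Fin n → Γ := fun j => e.symm (Pi.single j 1) with hs
  have hDadd : ∀ i (f g : LaurentField Γ), D i (f + g) = D i f + D i g := by
    intro i f g
    ext γ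
    rw [hD, HahnSeries.coeff_add, HahnSeries.coeff_add, hD, hD]
    ring
  have hDsmul : ∀ i (c : ℂ) (f : LaurentField Γ), D i (c • f) = c • D i f := by
    intro i c f
    ext γ
    rw [HahnSeries.coeff_smul, hD, hD, HahnSeries.coeff_smul, smul_eq_mul, smul_eq_mul]
    ring
  set Dlin : Fin n → (LaurentField Γ →ₗ[ℂ] LaurentField Γ) := fun i =>
    { toFun := D i, map_add' := hDadd i, map_smul' := fun c f => hDsmul i c f } with hDlin
  haveI : SMulCommClass ℂ (LaurentField Γ) (LaurentField Γ) :=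
    ⟨fun c a b => by
      show c • (a * b) = a * (c • b)
      rw [← HahnSeries.single_zero_mul_eq_smul, ← HahnSeries.single_zero_mul_eq_smul, mul_left_comm]⟩
  set bil : LaurentField Γ →ₗ[LaurentField Γ] (LaurentField Γ →ₗ[ℂ] (Fin n → LaurentField Γ)) :=
    { toFun := fun u => LinearMap.pi fun j => (LinearMap.mulLeft ℂ u).comp (Dlin j)
      map_add' := by
        intro u v
        ext w j
        simp [add_mul]
      map_smul' := by
        intro r u
        ext w j
        simp [smul_eq_mul, mul_assoc] } with hbil
  set φ : TensorSq Γ →ₗ[LaurentField Γ] (Fin n → LaurentField Γ) :=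
    TensorProduct.AlgebraTensorModule.lift bil with hφ
  have hφtmul : ∀ (u v : LaurentField Γ) (j : Fin n), φ (u ⊗ₜ[ℂ] v) j = u * D j v := by
    intro u v j
    rw [hφ, TensorProduct.AlgebraTensorModule.lift_tmul]
    rfl
  have hDx : ∀ i j : Fin n, D i (HahnSeries.single (s j) (1 : ℂ)) = if i = j then 1 else 0 := by
    intro i j
    ext γ
    rw [hD]
    by_cases hij : i = j
    · subst hij
      by_cases hγ : γ = 0
      · subst hγ
        rw [zero_add, HahnSeries.coeff_single_same, if_pos rfl, HahnSeries.coeff_one, if_pos rfl]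
        simp
      · rw [if_pos rfl, HahnSeries.coeff_one, if_neg hγ,
          HahnSeries.coeff_single_of_ne (fun hc => hγ (add_eq_right.mp hc)), mul_zero]
    · rw [if_neg hij, HahnSeries.coeff_zero]
      by_cases h : γ + s i = s j
      · have hγval : (e γ) i = -1 := by
          have h1 : e γ + Pi.single i 1 = Pi.single j (1 : ℚ) := by
            have h2 := congrArg e h
            rw [map_add] at h2
            simpa [hs, LinearEquiv.apply_symm_apply] using h2
          have h3 := congrFun h1 i
          simp [Pi.single_apply, hij, Ne.symm hij] at h3
          linarith
        have hz : ((e γ i + 1 : ℚ) : ℂ) = 0 := by rw [hγval]; norm_num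
        rw [hz, zero_mul]
      · rw [HahnSeries.coeff_single_of_ne h, mul_zero]
  have hker : MFD ≤ LinearMap.ker φ := by
    rw [hMFD, Submodule.span_le]
    rintro _ ⟨f, rfl⟩
    rw [SetLike.mem_coe, LinearMap.mem_ker, map_sub, map_sum, sub_eq_zero]
    funext i
    rw [Finset.sum_apply, hφtmul]
    have hterm : ∀ j : Fin n,
        φ ((D j f) ⊗ₜ[ℂ] HahnSeries.single (s j) (1 : ℂ)) i
          = D j f * D i (HahnSeries.single (s j) (1 : ℂ)) := fun j => hφtmul _ _ i
    rw [Finset.sum_congr rfl fun j _ => hterm j]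
    simp [hDx, one_mul]
  set φbar := MFD.liftQ φ hker with hφbar
  have hφbarDiff : ∀ (f : LaurentField Γ) (j : Fin n), φbar (formDiff MFD f) j = D j f := by
    intro f j
    have h1 : φbar (formDiff MFD f) = φ (1 ⊗ₜ[ℂ] f) := rfl
    rw [h1, hφtmul, one_mul]
  set A : (TensorSq Γ ⧸ MFD) [⋀^Fin n]→ₗ[LaurentField Γ] (LaurentField Γ) :=
    (Matrix.detRowAlternating :
        (Fin n → LaurentField Γ) [⋀^Fin n]→ₗ[LaurentField Γ] LaurentField Γ).compLinearMap
      φbar with hA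
  set L : ExteriorAlgebra (LaurentField Γ) (TensorSq Γ ⧸ MFD) →ₗ[LaurentField Γ] LaurentField Γ :=
    ExteriorAlgebra.liftAlternating (Pi.single n A) with hL
  have hLtop : ∀ y : Fin n → LaurentField Γ,
      L (topForm MFD y) = Matrix.det (Matrix.of fun i j => D j (y i)) := by
    intro y
    have h1 : topForm MFD y
        = ExteriorAlgebra.ιMulti (LaurentField Γ) n (fun i => formDiff MFD (y i)) :=
      (ExteriorAlgebra.ιMulti_apply _).symm
    rw [h1, hL, ExteriorAlgebra.liftAlternating_apply_ιMulti, Pi.single_eq_same, hA,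
      AlternatingMap.compLinearMap_apply]
    show Matrix.det (Matrix.of fun i => φbar (formDiff MFD (y i))) = _
    congr 1
    exact Matrix.ext fun i j => hφbarDiff (y i) j
  have hLsmul : ∀ (f : LaurentField Γ) ω, L (f • ω) = f * L ω := by
    intro f ω
    rw [map_smul, smul_eq_mul]
  have hdet : ∀ {y : Fin n → LaurentField Γ}, Admissible y →
      Matrix.det (Matrix.of fun i j => D j (y i)) ≠ 0 ∧
        (Matrix.det (Matrix.of fun i j => D j (y i))).order + ∑ j, s j
          = ∑ i, (y i).order := by
    intro y hy
    obtain ⟨b, hb⟩ := hy.2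
    exact aux_det e D hD hy.1 b hb
  constructor
  · intro f g y y' hy hy' heq
    have hLeq : f * Matrix.det (Matrix.of fun i j => D j (y i))
        = g * Matrix.det (Matrix.of fun i j => D j (y' i)) := by
      have h1 := congrArg L heq
      rwa [hLsmul, hLsmul, hLtop, hLtop] at h1
    obtain ⟨hdy, hoy⟩ := hdet hy
    obtain ⟨hdy', hoy'⟩ := hdet hy'
    by_cases hf : f = 0
    · left
      refine ⟨hf, ?_⟩
      rw [hf, zero_mul] at hLeq
      rcases mul_eq_zero.mp hLeq.symm with h | h
      · exact h
      · exact absurd h hdy'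
    · right
      have hg : g ≠ 0 := by
        intro hg
        rw [hg, zero_mul] at hLeq
        rcases mul_eq_zero.mp hLeq with h | h
        · exact hf h
        · exact hdy h
      refine ⟨hf, hg, ?_⟩
      have horder := congrArg HahnSeries.order hLeq
      rw [HahnSeries.order_mul hf hdy, HahnSeries.order_mul hg hdy'] at horder
      calc f.order + ∑ i, (y i).order
          = f.order + ((Matrix.det (Matrix.of fun i j => D j (y i))).order + ∑ j, s j) := by
            rw [hoy]
        _ = (f.order + (Matrix.det (Matrix.of fun i j => D j (y i))).order) + ∑ j, s j := by
            rw [add_assoc]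
        _ = (g.order + (Matrix.det (Matrix.of fun i j => D j (y' i))).order) + ∑ j, s j := by
            rw [horder]
        _ = g.order + ((Matrix.det (Matrix.of fun i j => D j (y' i))).order + ∑ j, s j) := by
            rw [add_assoc]
        _ = g.order + ∑ i, (y' i).order := by rw [hoy']
  · set N : ExteriorAlgebra (LaurentField Γ) (TensorSq Γ ⧸ MFD) → WithTop Γ :=
      fun ω => if L ω = 0 then ⊤ else (((L ω).order + ∑ j, s j : Γ) : WithTop Γ) with hN
    have hNval : ∀ ω, N ω
        = if L ω = 0 then ⊤ else (((L ω).order + ∑ j, s j : Γ) : WithTop Γ) := fun _ => rfl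
    refine ⟨N, ?_, ?_, ?_, ?_⟩
    · rw [hNval, map_zero, if_pos rfl]
    · intro f y hy hf
      obtain ⟨hdy, hoy⟩ := hdet hy
      have hval : L (f • topForm MFD y) = f * Matrix.det (Matrix.of fun i j => D j (y i)) := by
        rw [hLsmul, hLtop]
      have hne : L (f • topForm MFD y) ≠ 0 := by
        rw [hval]
        exact mul_ne_zero hf hdy
      rw [hNval, if_neg hne, hval, HahnSeries.order_mul hf hdy, add_assoc, hoy]
    · intro ω₁ ω₂ _ _
      rw [hNval, hNval, hNval]
      by_cases h12 : L (ω₁ + ω₂) = 0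
      · rw [if_pos h12]
        exact le_top
      by_cases h1 : L ω₁ = 0
      · have h2 : L (ω₁ + ω₂) = L ω₂ := by rw [map_add, h1, zero_add]
        rw [if_pos h1, h2]
        rw [h2] at h12
        rw [if_neg h12]
        exact min_le_right _ _
      by_cases h2 : L ω₂ = 0
      · have h1' : L (ω₁ + ω₂) = L ω₁ := by rw [map_add, h2, add_zero]
        rw [if_pos h2, h1']
        rw [h1'] at h12
        rw [if_neg h12]
        exact min_le_left _ _
      · have hsum : L ω₁ + L ω₂ ≠ 0 := by rwa [map_add] at h12
        rw [if_neg h1, if_neg h2, if_neg h12, map_add]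
        have hmin := HahnSeries.min_order_le_order_add hsum
        rw [← WithTop.coe_min, WithTop.coe_le_coe, min_add_add_right]
        exact add_le_add_left hmin _
    · intro g ω _ hg
      rw [hNval, hNval]
      by_cases hω : L ω = 0
      · have h0 : L (g • ω) = 0 := by rw [hLsmul, hω, mul_zero]
        rw [if_pos h0, if_pos hω, add_top]
      · have hgo : L (g • ω) = g * L ω := hLsmul g ω
        have hne : L (g • ω) ≠ 0 := by
          rw [hgo]
          exact mul_ne_zero hg hω
        rw [if_neg hne, if_neg hω, hgo, HahnSeries.order_mul hg hω, add_assoc, WithTop.coe_add]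


end
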